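/- Let A be a nonempty finite alphabet and μ a probability distribution on A. For n > 1 let L_n = (1/n) Σ_{u : Fin n → A} μ^n(u) · (1/|S_u|) Σ_i i · α_i(|S_u|) · 2^i be the expected number of secret bits per covertext letter transmitted by the stegosystem St_n(A), where |S_u| = n!/∏_{a∈A} ν_u(a)! and α_i(N) are the binary digits of N. Then L_n → h(μ) as n → ∞, where h(μ) = − Σ_{a∈A} μ(a) log₂ μ(a) is the Shannon entropy of μ. -/

import Mathlib

set_option linter.unusedSectionVars false
set_option maxHeartbeats 1000000

/-- ν_u(a): the number of occurrences of the letter `a` in the word `u`. -/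
def freq {A : Type*} [DecidableEq A] {n : ℕ} (u : Fin n → A) (a : A) : ℕ :=
  (Finset.univ.filter fun i => u i = a).card

/-- |S_u| = n! / ∏ₐ ν_u(a)! : the size of the type class of `u`. -/
def typeClassCard {A : Type*} [Fintype A] [DecidableEq A] {n : ℕ} (u : Fin n → A) : ℕ :=
  n.factorial / ∏ a : A, (freq u a).factorial

/-- α_i(N): the i-th binary digit of `N`. -/
def binDigit (N i : ℕ) : ℕ := N / 2 ^ i % 2

/-- E(N) = (1/N) Σ_i i · α_i(N) · 2^i : the expected number of secret bits encoded
into one covertext block whose type class has size `N`. -/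
noncomputable def expBits (N : ℕ) : ℝ :=
  (1 / (N : ℝ)) * ∑ i ∈ Finset.range (Nat.log 2 N + 1), (i : ℝ) * (binDigit N i : ℝ) * 2 ^ i

/-- L_n: the expected number of secret bits per covertext letter transmitted by
the stegosystem St_n(A). -/
noncomputable def rateL (A : Type*) [Fintype A] [DecidableEq A] (μ : PMF A) (n : ℕ) : ℝ :=
  (1 / (n : ℝ)) * ∑ u : Fin n → A, (∏ i, (μ (u i)).toReal) * expBits (typeClassCard u)

namespace Stego13
open Finset Real

variable {A : Type*} [Fintype A] [DecidableEq A] {n : ℕ}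

lemma sum_freq (u : Fin n → A) : ∑ a, freq u a = n := by
  classical
  have := Finset.card_eq_sum_card_fiberwise (s := (univ : Finset (Fin n)))
    (t := (univ : Finset A)) (f := u) (fun x _ => mem_univ _)
  simpa [freq] using this.symm

lemma freq_le (u : Fin n → A) (a : A) : freq u a ≤ n := by
  classical
  simpa [freq] using (Finset.card_filter_le (univ : Finset (Fin n)) (fun i => u i = a))

lemma prod_comp_eq_prod_pow (u : Fin n → A) (f : A → ℝ) :
    ∏ i, f (u i) = ∏ a, f a ^ freq u a := by
  classical
  rw [← Finset.prod_fiberwise_of_maps_to (g := u) (t := (univ : Finset A))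
    (fun x _ => mem_univ _) (fun i => f (u i))]
  refine Finset.prod_congr rfl fun a _ => ?_
  rw [Finset.prod_congr rfl (fun i hi => ?_), Finset.prod_const, freq]
  · exact congrArg f (by simpa using (Finset.mem_filter.mp hi).2)

lemma sum_pi_prod (g : Fin n → A → ℝ) :
    ∑ u : Fin n → A, ∏ i, g i (u i) = ∏ i, ∑ a, g i a := by
  classical
  rw [Finset.prod_univ_sum (fun _ => (univ : Finset A)) g]
  rw [Fintype.piFinset_univ]

lemma sum_prod_comp (f : A → ℝ) :
    ∑ u : Fin n → A, ∏ i, f (u i) = (∑ a, f a) ^ n := by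
  simpa using sum_pi_prod (fun _ : Fin n => f)

lemma expectation_sum (p : A → ℝ) (hp : ∑ a, p a = 1) (f : A → ℝ) :
    ∑ u : Fin n → A, (∏ i, p (u i)) * (∑ i, f (u i)) = n * ∑ a, p a * f a := by
  classical
  have key : ∀ j : Fin n, ∑ u : Fin n → A, (∏ i, p (u i)) * f (u j) = ∑ a, p a * f a := by
    intro j
    have h1 : ∀ u : Fin n → A,
        (∏ i, p (u i)) * f (u j)
          = ∏ i, (if i = j then p (u i) * f (u i) else p (u i)) := by
      intro u
      rw [← Finset.mul_prod_erase univ (fun i => p (u i)) (mem_univ j)]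
      rw [← Finset.mul_prod_erase univ
        (fun i => if i = j then p (u i) * f (u i) else p (u i)) (mem_univ j)]
      rw [if_pos rfl]
      rw [Finset.prod_congr rfl (fun i hi => if_neg (Finset.ne_of_mem_erase hi))]
      ring
    have h2 := sum_pi_prod (n := n) (fun i a => if i = j then p a * f a else p a)
    rw [Finset.sum_congr rfl (fun u _ => h1 u), h2]
    rw [Finset.prod_eq_single_of_mem j (mem_univ j) (fun i _ hij => by simp [hij, hp])]
    simp
  calc ∑ u : Fin n → A, (∏ i, p (u i)) * (∑ i, f (u i))
      = ∑ u : Fin n → A, ∑ j, (∏ i, p (u i)) * f (u j) := by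
        exact Finset.sum_congr rfl fun u _ => by rw [Finset.mul_sum]
    _ = ∑ j : Fin n, ∑ u : Fin n → A, (∏ i, p (u i)) * f (u j) := Finset.sum_comm
    _ = ∑ _j : Fin n, ∑ a, p a * f a := Finset.sum_congr rfl fun j _ => key j
    _ = n * ∑ a, p a * f a := by simp [mul_comm]

lemma log_factorial_ge : ∀ m : ℕ, 1 ≤ m →
    (m : ℝ) * Real.log m - m + 1 ≤ Real.log (Nat.factorial m) := by
  refine Nat.le_induction ?_ ?_
  · simp
  · intro m hm ih
    have hm0 : (0:ℝ) < m := by exact_mod_cast hm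
    have hlog2 : (m:ℝ) * (Real.log ((m:ℝ)+1) - Real.log m) ≤ 1 := by
      have h := Real.log_le_sub_one_of_pos (x := ((m:ℝ)+1)/m) (by positivity)
      rw [Real.log_div (by positivity) (ne_of_gt hm0)] at h
      have h2 : ((m:ℝ)+1)/m - 1 = 1/m := by field_simp; ring
      rw [h2] at h
      calc (m:ℝ) * (Real.log ((m:ℝ)+1) - Real.log m) ≤ m * (1/m) :=
            mul_le_mul_of_nonneg_left h hm0.le
        _ = 1 := by field_simp
    have hfact : Real.log (Nat.factorial (m+1)) = Real.log ((m:ℝ)+1) + Real.log (Nat.factorial m) := by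
      rw [Nat.factorial_succ]
      push_cast
      rw [Real.log_mul (by positivity) (by positivity)]
    rw [hfact]
    push_cast
    nlinarith [hlog2, ih]

lemma log_factorial_le : ∀ m : ℕ, 1 ≤ m →
    Real.log (Nat.factorial m) ≤ (m : ℝ) * Real.log m - m + 1 + Real.log m := by
  refine Nat.le_induction ?_ ?_
  · simp
  · intro m hm ih
    have hm0 : (0:ℝ) < m := by exact_mod_cast hm
    have hm1 : (0:ℝ) < (m:ℝ) + 1 := by linarith
    have hlog2 : 1 ≤ ((m:ℝ)+1) * (Real.log ((m:ℝ)+1) - Real.log m) := by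
      have h := Real.log_le_sub_one_of_pos (x := (m:ℝ)/((m:ℝ)+1)) (by positivity)
      rw [Real.log_div (ne_of_gt hm0) (by positivity)] at h
      have h2 : (m:ℝ)/((m:ℝ)+1) - 1 = -(1/((m:ℝ)+1)) := by field_simp; ring
      rw [h2] at h
      have h3 : 1/((m:ℝ)+1) ≤ Real.log ((m:ℝ)+1) - Real.log m := by linarith
      calc (1:ℝ) = ((m:ℝ)+1) * (1/((m:ℝ)+1)) := by field_simp
        _ ≤ ((m:ℝ)+1) * (Real.log ((m:ℝ)+1) - Real.log m) :=
            mul_le_mul_of_nonneg_left h3 hm1.le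
    have hfact : Real.log (Nat.factorial (m+1)) = Real.log ((m:ℝ)+1) + Real.log (Nat.factorial m) := by
      rw [Nat.factorial_succ]
      push_cast
      rw [Real.log_mul (by positivity) (by positivity)]
    rw [hfact]
    push_cast
    nlinarith [hlog2, ih]

lemma typeClassCard_mul_eq (u : Fin n → A) :
    typeClassCard u * ∏ a, (freq u a).factorial = n.factorial := by
  have hd : (∏ a, (freq u a).factorial) ∣ n.factorial := by
    have := Nat.prod_factorial_dvd_factorial_sum univ (freq u)
    rwa [sum_freq] at this
  rw [typeClassCard, Nat.div_mul_cancel hd]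

lemma typeClassCard_pos (u : Fin n → A) : 0 < typeClassCard u := by
  rcases Nat.eq_zero_or_pos (typeClassCard u) with h | h
  · exfalso
    have := typeClassCard_mul_eq u
    rw [h, zero_mul] at this
    exact (Nat.factorial_pos n).ne' this.symm
  · exact h

lemma log_typeClassCard (u : Fin n → A) :
    Real.log (typeClassCard u) =
      Real.log (Nat.factorial n) - ∑ a, Real.log (Nat.factorial (freq u a)) := by
  have h := typeClassCard_mul_eq u
  have h' : (typeClassCard u : ℝ) * ∏ a, ((freq u a).factorial : ℝ) = (n.factorial : ℝ) := by
    exact_mod_cast congrArg (Nat.cast : ℕ → ℝ) h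
  have hlog := congrArg Real.log h'
  rw [Real.log_mul (by exact_mod_cast (typeClassCard_pos u).ne')
      (by positivity), Real.log_prod (fun a _ => by positivity)] at hlog
  linarith

/- binary digits -/
lemma sum_binDigit_mul (N : ℕ) : ∀ k, ∑ i ∈ Finset.range k, binDigit N i * 2 ^ i = N % 2 ^ k := by
  intro k
  induction k with
  | zero => simp [Nat.mod_one]
  | succ k ih =>
      rw [Finset.sum_range_succ, ih, Nat.mod_pow_succ, binDigit]
      ring

lemma sum_binDigit (N : ℕ) (h : 1 ≤ N) :
    ∑ i ∈ Finset.range (Nat.log 2 N + 1), binDigit N i * 2 ^ i = N := by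
  rw [sum_binDigit_mul, Nat.mod_eq_of_lt (Nat.lt_pow_succ_log_self one_lt_two N)]

lemma binDigit_le_one (N i : ℕ) : binDigit N i ≤ 1 :=
  Nat.lt_succ_iff.mp (Nat.mod_lt _ (by norm_num))

lemma geom_weighted (L : ℕ) :
    ∑ i ∈ Finset.range (L+1), ((L:ℝ) - i) * 2 ^ i = 2 ^ (L+1) - (L + 2) := by
  induction L with
  | zero => norm_num
  | succ L ih =>
      rw [Finset.sum_range_succ]
      have e : ∀ i ∈ Finset.range (L+1), (((L:ℝ)+1) - i) * 2 ^ i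
          = ((L:ℝ) - i) * 2 ^ i + 2 ^ i := by intro i _; ring
      push_cast
      rw [Finset.sum_congr rfl e, Finset.sum_add_distrib, ih, geom_sum_eq (by norm_num) (L+1)]
      push_cast
      ring

lemma expBits_le (N : ℕ) (h : 1 ≤ N) : expBits N ≤ Real.logb 2 N := by
  set L := Nat.log 2 N with hL
  have hN0 : (0:ℝ) < N := by exact_mod_cast h
  have hsum : ∑ i ∈ Finset.range (L+1), (i:ℝ) * (binDigit N i : ℝ) * 2 ^ i ≤ (L:ℝ) * N := by
    calc ∑ i ∈ Finset.range (L+1), (i:ℝ) * (binDigit N i : ℝ) * 2 ^ i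
        ≤ ∑ i ∈ Finset.range (L+1), (L:ℝ) * ((binDigit N i : ℝ) * 2 ^ i) := by
          refine Finset.sum_le_sum fun i hi => ?_
          have hiL : (i:ℝ) ≤ L := by
            exact_mod_cast Nat.lt_succ_iff.mp (Finset.mem_range.mp hi)
          have : (0:ℝ) ≤ (binDigit N i : ℝ) * 2 ^ i := by positivity
          nlinarith
      _ = (L:ℝ) * ∑ i ∈ Finset.range (L+1), (binDigit N i : ℝ) * 2 ^ i := by
          rw [Finset.mul_sum]
      _ = (L:ℝ) * N := by
          congr 1
          exact_mod_cast congrArg (Nat.cast : ℕ → ℝ) (sum_binDigit N h)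
  have h1 : expBits N ≤ L := by
    rw [expBits]
    rw [div_mul_eq_mul_div, one_mul, div_le_iff₀ hN0]
    linarith [hsum]
  exact h1.trans (Real.natLog_le_logb N 2)

lemma expBits_ge (N : ℕ) (h : 1 ≤ N) : Real.logb 2 N - 3 ≤ expBits N := by
  set L := Nat.log 2 N with hL
  have hN0 : (0:ℝ) < N := by exact_mod_cast h
  have hdig : ∑ i ∈ Finset.range (L+1), ((binDigit N i : ℝ)) * 2 ^ i = N := by
    exact_mod_cast congrArg (Nat.cast : ℕ → ℝ) (sum_binDigit N h)
  have hsum : (L:ℝ) * N - 2 * N ≤ ∑ i ∈ Finset.range (L+1), (i:ℝ) * (binDigit N i : ℝ) * 2 ^ i := by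
    have key : ∀ i ∈ Finset.range (L+1),
        (L:ℝ) * ((binDigit N i : ℝ) * 2 ^ i) - ((L:ℝ) - i) * 2 ^ i
          ≤ (i:ℝ) * (binDigit N i : ℝ) * 2 ^ i := by
      intro i hi
      have hiL : (i:ℝ) ≤ L := by
        exact_mod_cast Nat.lt_succ_iff.mp (Finset.mem_range.mp hi)
      have hb1 : (binDigit N i : ℝ) ≤ 1 := by exact_mod_cast binDigit_le_one N i
      have hb0 : (0:ℝ) ≤ (binDigit N i : ℝ) := by positivity
      have h2 : (0:ℝ) < 2 ^ i := by positivity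
      nlinarith [mul_nonneg (mul_nonneg (sub_nonneg.mpr hiL) (sub_nonneg.mpr hb1)) h2.le]
    calc (L:ℝ) * N - 2 * N
        ≤ (L:ℝ) * N - (2 ^ (L+1) - ((L:ℝ) + 2)) + - (L+2) + 2 := by
          have hpow : (2:ℝ) ^ (L+1) ≤ 2 * N := by
            have : (2:ℕ) ^ L ≤ N := Nat.pow_log_le_self 2 (by omega)
            have : (2:ℝ) ^ L ≤ N := by exact_mod_cast this
            rw [pow_succ]
            linarith
          have hL0 : (0:ℝ) ≤ L := by positivity
          linarith
      _ ≤ (L:ℝ) * N - ∑ i ∈ Finset.range (L+1), ((L:ℝ) - i) * 2 ^ i + - (L+2) + 2 := by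
          rw [geom_weighted]
      _ = ∑ i ∈ Finset.range (L+1), ((L:ℝ) * ((binDigit N i : ℝ) * 2 ^ i) - ((L:ℝ) - i) * 2 ^ i)
            + - (L+2) + 2 := by
          rw [Finset.sum_sub_distrib, ← Finset.mul_sum, hdig]
      _ ≤ ∑ i ∈ Finset.range (L+1), (i:ℝ) * (binDigit N i : ℝ) * 2 ^ i + - (L+2) + 2 := by
          have := Finset.sum_le_sum key
          linarith
      _ ≤ ∑ i ∈ Finset.range (L+1), (i:ℝ) * (binDigit N i : ℝ) * 2 ^ i := by
          have hL0 : (0:ℝ) ≤ L := by positivity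
          linarith
  have hlogb : Real.logb 2 N ≤ (L:ℝ) + 1 := by
    have hlt : (N:ℝ) < 2 ^ (L+1) := by
      exact_mod_cast Nat.lt_pow_succ_log_self one_lt_two N
    calc Real.logb 2 N ≤ Real.logb 2 (2 ^ (L+1)) :=
          Real.logb_le_logb_of_le (by norm_num : (1:ℝ) < 2) hN0 (le_of_lt hlt)
      _ = (L:ℝ) + 1 := by
          rw [Real.logb_pow, Real.logb_self_eq_one (by norm_num)]
          push_cast; ring
  have : (L:ℝ) - 2 ≤ expBits N := by
    rw [expBits, div_mul_eq_mul_div, one_mul, le_div_iff₀ hN0]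
    nlinarith [hsum]
  linarith
lemma jensen_log {ι : Type*} (s : Finset ι) (w y : ι → ℝ)
    (hw : ∀ i ∈ s, 0 < w i) (hy : ∀ i ∈ s, 0 < y i) (hs : ∑ i ∈ s, w i = 1) :
    ∑ i ∈ s, w i * Real.log (y i) ≤ Real.log (∑ i ∈ s, w i * y i) := by
  have hne : s.Nonempty := by
    by_contra h
    rw [Finset.not_nonempty_iff_eq_empty] at h
    rw [h] at hs; simp at hs
  set c := ∑ i ∈ s, w i * y i with hc
  have hc0 : 0 < c := Finset.sum_pos (fun i hi => mul_pos (hw i hi) (hy i hi)) hne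
  have key : ∀ i ∈ s, w i * Real.log (y i) ≤ ((w i * y i) / c - w i) + w i * Real.log c := by
    intro i hi
    have h1 : Real.log (y i) = Real.log (y i / c) + Real.log c := by
      rw [Real.log_div (hy i hi).ne' hc0.ne']; ring
    have h2 : Real.log (y i / c) ≤ y i / c - 1 := Real.log_le_sub_one_of_pos (by
      exact div_pos (hy i hi) hc0)
    have h3 := mul_le_mul_of_nonneg_left h2 (hw i hi).le
    have h4 : w i * (y i / c - 1) = (w i * y i) / c - w i := by
      field_simp
    calc w i * Real.log (y i) = w i * Real.log (y i / c) + w i * Real.log c := by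
          rw [h1]; ring
      _ ≤ ((w i * y i) / c - w i) + w i * Real.log c := by rw [← h4]; linarith
  calc ∑ i ∈ s, w i * Real.log (y i)
      ≤ ∑ i ∈ s, (((w i * y i) / c - w i) + w i * Real.log c) := Finset.sum_le_sum key
    _ = (∑ i ∈ s, w i * y i) / c - (∑ i ∈ s, w i) + (∑ i ∈ s, w i) * Real.log c := by
        rw [Finset.sum_add_distrib, Finset.sum_sub_distrib, ← Finset.sum_div, ← Finset.sum_mul]
    _ = Real.log c := by rw [hs, ← hc, div_self hc0.ne']; ring

lemma sum_X_le (hn : 1 ≤ n) :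
    ∑ u : Fin n → A, ∏ a, ((freq u a : ℝ)) ^ (freq u a)
      ≤ (n : ℝ) ^ n * ((n : ℝ) + 1) ^ (Fintype.card A) := by
  classical
  set X : (Fin n → A) → ℝ := fun u => ∏ a, ((freq u a : ℝ)) ^ (freq u a) with hX
  set t : Finset (A → ℕ) := Finset.image (fun u : Fin n → A => freq u) univ with ht
  have hfib := Finset.sum_fiberwise_of_maps_to (s := (univ : Finset (Fin n → A)))
      (g := fun u : Fin n → A => freq u) (t := t)
      (fun u _ => Finset.mem_image_of_mem _ (mem_univ u)) X
  rw [← hfib]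
  have hfiber_le : ∀ k ∈ t, ∑ u ∈ univ.filter (fun u => freq u = k), X u ≤ (n:ℝ)^n := by
    intro k hk
    obtain ⟨u₀, _, hu₀⟩ := Finset.mem_image.mp hk
    have hsumk : ∑ a, (k a : ℝ) = n := by
      rw [← hu₀]
      push_cast [← sum_freq u₀]
      rfl
    have hXeq : ∀ u ∈ univ.filter (fun u => freq u = k), X u = ∏ i, (k (u i) : ℝ) := by
      intro u hu
      have hku : freq u = k := by simpa using (Finset.mem_filter.mp hu).2
      rw [hX]
      simp only
      rw [prod_comp_eq_prod_pow u (fun a => (k a : ℝ)), hku]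
    calc ∑ u ∈ univ.filter (fun u => freq u = k), X u
        = ∑ u ∈ univ.filter (fun u => freq u = k), ∏ i, (k (u i) : ℝ) :=
          Finset.sum_congr rfl hXeq
      _ ≤ ∑ u : Fin n → A, ∏ i, (k (u i) : ℝ) :=
          Finset.sum_le_sum_of_subset_of_nonneg (Finset.filter_subset _ _)
            (fun u _ _ => by positivity)
      _ = (∑ a, (k a : ℝ)) ^ n := sum_prod_comp (fun a => (k a : ℝ))
      _ = (n:ℝ)^n := by rw [hsumk]
  have hcard : (t.card : ℝ) ≤ ((n:ℝ) + 1) ^ (Fintype.card A) := by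
    have hsub : t ⊆ Fintype.piFinset (fun _ : A => Finset.range (n+1)) := by
      intro k hk
      obtain ⟨u₀, _, hu₀⟩ := Finset.mem_image.mp hk
      rw [Fintype.mem_piFinset]
      intro a
      rw [← hu₀]
      exact Finset.mem_range.mpr (Nat.lt_succ_of_le (freq_le u₀ a))
    have h1 : t.card ≤ (n+1) ^ (Fintype.card A) := by
      calc t.card ≤ (Fintype.piFinset (fun _ : A => Finset.range (n+1))).card :=
            Finset.card_le_card hsub
        _ = (n+1) ^ (Fintype.card A) := by
            rw [Fintype.card_piFinset]
            simp [Finset.card_range]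
    calc (t.card : ℝ) ≤ ((n+1 : ℕ) : ℝ) ^ (Fintype.card A) := by exact_mod_cast h1
      _ = ((n:ℝ) + 1) ^ (Fintype.card A) := by push_cast; ring
  calc ∑ k ∈ t, ∑ u ∈ univ.filter (fun u => freq u = k), X u
      ≤ ∑ _k ∈ t, (n:ℝ)^n := Finset.sum_le_sum hfiber_le
    _ = (t.card : ℝ) * (n:ℝ)^n := by rw [Finset.sum_const, nsmul_eq_mul]
    _ ≤ ((n:ℝ) + 1) ^ (Fintype.card A) * (n:ℝ)^n := by
        have hnn : (0:ℝ) ≤ (n:ℝ)^n := by positivity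
        exact mul_le_mul_of_nonneg_right hcard hnn
    _ = (n : ℝ) ^ n * ((n : ℝ) + 1) ^ (Fintype.card A) := by ring

lemma X_pos (u : Fin n → A) : 0 < ∏ a, ((freq u a : ℝ)) ^ (freq u a) := by
  refine Finset.prod_pos fun a _ => ?_
  rcases Nat.eq_zero_or_pos (freq u a) with h0 | h0
  · rw [h0, pow_zero]; norm_num
  · have : (0:ℝ) < (freq u a : ℝ) := by exact_mod_cast h0
    positivity

lemma log_X (u : Fin n → A) :
    Real.log (∏ a, ((freq u a : ℝ)) ^ (freq u a))
      = ∑ a, (freq u a : ℝ) * Real.log (freq u a) := by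
  rw [Real.log_prod (fun a _ => ?_)]
  · exact Finset.sum_congr rfl fun a _ => by rw [Real.log_pow]
  · rcases Nat.eq_zero_or_pos (freq u a) with h0 | h0
    · rw [h0, pow_zero]; norm_num
    · have : (0:ℝ) < (freq u a : ℝ) := by exact_mod_cast h0
      positivity

lemma sum_freq_real (u : Fin n → A) : ∑ a, (freq u a : ℝ) = n := by
  exact_mod_cast congrArg (Nat.cast : ℕ → ℝ) (sum_freq u)

lemma main_bound (p : A → ℝ) (hp0 : ∀ a, 0 ≤ p a) (hp1 : ∑ a, p a = 1) (hn : 1 ≤ n) :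
    |(1 / (n : ℝ)) * (∑ u : Fin n → A, (∏ i, p (u i)) * expBits (typeClassCard u))
        - (-∑ a, p a * Real.logb 2 (p a))|
      ≤ ((3 * (Fintype.card A : ℝ) + 2) * (Real.log ((n:ℝ)+1) + 1)) / ((n:ℝ) * Real.log 2)
        + 3 / (n:ℝ) := by
  classical
  have hn0 : (0:ℝ) < n := by exact_mod_cast hn
  have hl2 : (0:ℝ) < Real.log 2 := Real.log_pos (by norm_num)
  have hlogn0 : 0 ≤ Real.log n := Real.log_natCast_nonneg n
  have hw0 : ∀ u : Fin n → A, 0 ≤ ∏ i, p (u i) := fun u => Finset.prod_nonneg fun i _ => hp0 _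
  have hwsum : ∑ u : Fin n → A, ∏ i, p (u i) = 1 := by
    rw [sum_prod_comp p, hp1, one_pow]
  -- support facts
  have hp_pos : ∀ u : Fin n → A, (∏ i, p (u i)) ≠ 0 → ∀ i, 0 < p (u i) := by
    intro u hu i
    have := Finset.prod_ne_zero_iff.mp hu i (mem_univ i)
    exact lt_of_le_of_ne (hp0 _) (Ne.symm this)
  have hp_pos' : ∀ u : Fin n → A, (∏ i, p (u i)) ≠ 0 → ∀ a, freq u a ≠ 0 → 0 < p a := by
    intro u hu a ha
    have hcard : 0 < (univ.filter fun i => u i = a).card := Nat.pos_of_ne_zero (by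
      simpa [freq] using ha)
    obtain ⟨i, hi⟩ := Finset.card_pos.mp hcard
    have hia : u i = a := by simpa using (Finset.mem_filter.mp hi).2
    rw [← hia]; exact hp_pos u hu i
  have hlogw : ∀ u : Fin n → A, (∏ i, p (u i)) ≠ 0 →
      Real.log (∏ i, p (u i)) = ∑ a, (freq u a : ℝ) * Real.log (p a) := by
    intro u hu
    rw [prod_comp_eq_prod_pow u p] at hu ⊢
    have hne : ∀ a ∈ (univ : Finset A), p a ^ freq u a ≠ 0 := by
      intro a _
      exact fun h => hu (Finset.prod_eq_zero (mem_univ a) h)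
    rw [Real.log_prod hne]
    exact Finset.sum_congr rfl fun a _ => by rw [Real.log_pow]
  have hlogw' : ∀ u : Fin n → A, (∏ i, p (u i)) ≠ 0 →
      Real.log (∏ i, p (u i)) = ∑ i, Real.log (p (u i)) :=
    fun u hu => Real.log_prod (fun i _ => (hp_pos u hu i).ne'
)
  -- entropy identity
  have hEnt : ∑ u : Fin n → A, (∏ i, p (u i)) * (-Real.log (∏ i, p (u i)))
      = (n:ℝ) * Real.log 2 * (-∑ a, p a * Real.logb 2 (p a)) := by
    have e1 := expectation_sum (n := n) p hp1 (fun a => -Real.log (p a))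
    have e2 : ∑ u : Fin n → A, (∏ i, p (u i)) * (∑ i, -Real.log (p (u i)))
        = ∑ u : Fin n → A, (∏ i, p (u i)) * (-Real.log (∏ i, p (u i))) := by
      refine Finset.sum_congr rfl fun u _ => ?_
      by_cases hu : (∏ i, p (u i)) = 0
      · rw [hu, zero_mul, zero_mul]
      · rw [hlogw' u hu, Finset.sum_neg_distrib]
    have e3 : ∀ a, p a * (-Real.log (p a)) = Real.log 2 * -(p a * Real.logb 2 (p a)) := by
      intro a
      simp only [Real.logb]
      field_simp
    rw [← e2, e1]
    rw [Finset.sum_congr rfl (fun a _ => e3 a), ← Finset.mul_sum, ← Finset.sum_neg_distrib]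
    ring
  -- Stirling upper/lower bounds for log of type class size
  have hZn : ∀ u : Fin n → A,
      ∑ a, ((freq u a : ℝ) * Real.log (freq u a) - (freq u a))
        = (∑ a, (freq u a : ℝ) * Real.log (freq u a)) - n := by
    intro u
    rw [Finset.sum_sub_distrib, sum_freq_real]
  have hub : ∀ u : Fin n → A, Real.log (typeClassCard u)
      ≤ (n:ℝ) * Real.log n - (∑ a, (freq u a : ℝ) * Real.log (freq u a)) + (1 + Real.log n) := by
    intro u
    rw [log_typeClassCard u]
    have h1 : Real.log (Nat.factorial n) ≤ (n:ℝ) * Real.log n - n + 1 + Real.log n :=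
      log_factorial_le n hn
    have h2 : (∑ a, (freq u a : ℝ) * Real.log (freq u a)) - n
        ≤ ∑ a, Real.log (Nat.factorial (freq u a)) := by
      rw [← hZn u]
      refine Finset.sum_le_sum fun a _ => ?_
      rcases Nat.eq_zero_or_pos (freq u a) with h0 | h0
      · simp [h0]
      · have := log_factorial_ge (freq u a) h0
        linarith
    linarith
  have hlb : ∀ u : Fin n → A,
      (n:ℝ) * Real.log n - (∑ a, (freq u a : ℝ) * Real.log (freq u a))
          - (Fintype.card A : ℝ) * (1 + Real.log n)
        ≤ Real.log (typeClassCard u) := by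
    intro u
    rw [log_typeClassCard u]
    have h1 : (n:ℝ) * Real.log n - n + 1 ≤ Real.log (Nat.factorial n) :=
      log_factorial_ge n hn
    have h2 : ∑ a, Real.log (Nat.factorial (freq u a))
        ≤ (∑ a, (freq u a : ℝ) * Real.log (freq u a)) - n
            + (Fintype.card A : ℝ) * (1 + Real.log n) := by
      have h3 : ∀ a ∈ (univ : Finset A), Real.log (Nat.factorial (freq u a))
          ≤ ((freq u a : ℝ) * Real.log (freq u a) - (freq u a)) + (1 + Real.log n) := by
        intro a _
        rcases Nat.eq_zero_or_pos (freq u a) with h0 | h0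
        · simp [h0]
          linarith
        · have h4 := log_factorial_le (freq u a) h0
          have h5 : Real.log (freq u a) ≤ Real.log n := by
            refine Real.log_le_log (by exact_mod_cast h0) ?_
            exact_mod_cast freq_le u a
          linarith
      calc ∑ a, Real.log (Nat.factorial (freq u a))
          ≤ ∑ a, (((freq u a : ℝ) * Real.log (freq u a) - (freq u a)) + (1 + Real.log n)) :=
            Finset.sum_le_sum h3
        _ = (∑ a, (freq u a : ℝ) * Real.log (freq u a)) - n
              + (Fintype.card A : ℝ) * (1 + Real.log n) := by
            rw [Finset.sum_add_distrib, hZn u, Finset.sum_const, Finset.card_univ,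
              nsmul_eq_mul]
    linarith
  -- Gibbs inequality (pointwise on the support)
  have hgibbs : ∀ u : Fin n → A, (∏ i, p (u i)) ≠ 0 →
      (n:ℝ) * Real.log n - (∑ a, (freq u a : ℝ) * Real.log (freq u a))
        ≤ -Real.log (∏ i, p (u i)) := by
    intro u hu
    set F : Finset A := univ.filter (fun a => (freq u a : ℝ) ≠ 0) with hF
    have hsF : ∑ a ∈ F, (freq u a : ℝ) = n := by
      rw [hF, Finset.sum_filter_ne_zero, sum_freq_real]
    have hpF : ∑ a ∈ F, p a ≤ 1 := by
      rw [← hp1]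
      exact Finset.sum_le_sum_of_subset_of_nonneg (Finset.filter_subset _ _)
        (fun a _ _ => hp0 a)
    have key : ∀ a ∈ F, (freq u a : ℝ) * (Real.log (p a) + Real.log n - Real.log (freq u a))
        ≤ (n:ℝ) * p a - (freq u a : ℝ) := by
      intro a ha
      have hν : (freq u a : ℝ) ≠ 0 := by
        have := (Finset.mem_filter.mp ha).2
        simpa using this
      have hν0 : (0:ℝ) < (freq u a : ℝ) :=
        lt_of_le_of_ne (by positivity) (Ne.symm hν)
      have hpa : 0 < p a := hp_pos' u hu a (by exact_mod_cast hν)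
      have hid : Real.log (p a) + Real.log n - Real.log (freq u a)
          = Real.log (p a * n / (freq u a)) := by
        rw [Real.log_div (mul_ne_zero hpa.ne' hn0.ne') hν, Real.log_mul hpa.ne' hn0.ne']
      have hle : Real.log (p a * n / (freq u a)) ≤ p a * n / (freq u a) - 1 :=
        Real.log_le_sub_one_of_pos (by positivity)
      have hfin : (freq u a : ℝ) * (p a * n / (freq u a) - 1) = (n:ℝ) * p a - (freq u a) := by
        field_simp
      rw [hid]
      calc (freq u a : ℝ) * Real.log (p a * n / (freq u a))
          ≤ (freq u a : ℝ) * (p a * n / (freq u a) - 1) :=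
            mul_le_mul_of_nonneg_left hle hν0.le
        _ = (n:ℝ) * p a - (freq u a) := hfin
    have hsum := Finset.sum_le_sum key
    have hexp : ∑ a ∈ F, (freq u a : ℝ) * (Real.log (p a) + Real.log n - Real.log (freq u a))
        = (∑ a ∈ F, (freq u a : ℝ) * Real.log (p a)) + (n:ℝ) * Real.log n
            - ∑ a ∈ F, (freq u a : ℝ) * Real.log (freq u a) := by
      have : ∀ a ∈ F, (freq u a : ℝ) * (Real.log (p a) + Real.log n - Real.log (freq u a))
          = (freq u a : ℝ) * Real.log (p a) + (freq u a : ℝ) * Real.log n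
              - (freq u a : ℝ) * Real.log (freq u a) := fun a _ => by ring
      rw [Finset.sum_congr rfl this, Finset.sum_sub_distrib, Finset.sum_add_distrib,
        ← Finset.sum_mul, hsF]
    have hrhs : ∑ a ∈ F, ((n:ℝ) * p a - (freq u a : ℝ)) ≤ 0 := by
      rw [Finset.sum_sub_distrib, ← Finset.mul_sum, hsF]
      nlinarith
    have hF1 : ∑ a ∈ F, (freq u a : ℝ) * Real.log (p a)
        = ∑ a, (freq u a : ℝ) * Real.log (p a) := by
      rw [hF]
      refine Finset.sum_filter_of_ne fun a _ hne => ?_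
      intro h0
      exact hne (by rw [h0, zero_mul])
    have hF2 : ∑ a ∈ F, (freq u a : ℝ) * Real.log (freq u a)
        = ∑ a, (freq u a : ℝ) * Real.log (freq u a) := by
      rw [hF]
      refine Finset.sum_filter_of_ne fun a _ hne => ?_
      intro h0
      exact hne (by rw [h0, zero_mul])
    rw [hexp, hF1, hF2] at hsum
    rw [hlogw u hu]
    linarith
  -- Jensen step
  have hJ : ∑ u : Fin n → A, (∏ i, p (u i)) *
        (-Real.log (∏ i, p (u i))
          - ((n:ℝ) * Real.log n - (∑ a, (freq u a : ℝ) * Real.log (freq u a))))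
      ≤ (Fintype.card A : ℝ) * Real.log ((n:ℝ)+1) := by
    set s : Finset (Fin n → A) := univ.filter (fun u => (∏ i, p (u i)) ≠ 0) with hs
    have hsum_s : ∑ u ∈ s, ∏ i, p (u i) = 1 := by
      rw [hs, Finset.sum_filter_ne_zero, hwsum]
    have hsne : s.Nonempty := by
      by_contra h
      rw [Finset.not_nonempty_iff_eq_empty] at h
      rw [h] at hsum_s; simp at hsum_s
    have hwpos : ∀ u ∈ s, 0 < ∏ i, p (u i) := by
      intro u hu
      have := (Finset.mem_filter.mp hu).2
      exact lt_of_le_of_ne (hw0 u) (Ne.symm (by simpa using this))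
    set y : (Fin n → A) → ℝ :=
      fun u => (∏ a, ((freq u a : ℝ)) ^ (freq u a)) / ((n:ℝ)^n * ∏ i, p (u i)) with hy
    have hypos : ∀ u ∈ s, 0 < y u := by
      intro u hu
      rw [hy]
      exact div_pos (X_pos u) (mul_pos (by positivity) (hwpos u hu))
    have hred : ∑ u : Fin n → A, (∏ i, p (u i)) *
        (-Real.log (∏ i, p (u i))
          - ((n:ℝ) * Real.log n - (∑ a, (freq u a : ℝ) * Real.log (freq u a))))
        = ∑ u ∈ s, (∏ i, p (u i)) * Real.log (y u) := by
      rw [← Finset.sum_subset (Finset.subset_univ s) (fun u _ hu => ?_)]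
      swap
      · have : ¬ ((∏ i, p (u i)) ≠ 0) := by
          intro hne
          exact hu (by rw [hs]; exact Finset.mem_filter.mpr ⟨mem_univ u, hne⟩)
        push_neg at this
        rw [this, zero_mul]
      refine Finset.sum_congr rfl fun u hu => ?_
      have huw : (∏ i, p (u i)) ≠ 0 := by
        rw [hs] at hu
        simpa using (Finset.mem_filter.mp hu).2
      congr 1
      rw [hy]
      simp only
      rw [Real.log_div (X_pos u).ne' (mul_ne_zero (by positivity) huw),
        Real.log_mul (by positivity) huw, log_X u, Real.log_pow]
      ring
    rw [hred]
    have hjen := jensen_log s (fun u => ∏ i, p (u i)) y hwpos hypos hsum_s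
    have hsy : ∑ u ∈ s, (∏ i, p (u i)) * y u
        = ∑ u ∈ s, (∏ a, ((freq u a : ℝ)) ^ (freq u a)) / (n:ℝ)^n := by
      refine Finset.sum_congr rfl fun u hu => ?_
      have huw : (∏ i, p (u i)) ≠ 0 := (hwpos u hu).ne'
      rw [hy]
      field_simp
    have hXsum : ∑ u ∈ s, (∏ a, ((freq u a : ℝ)) ^ (freq u a)) / (n:ℝ)^n
        ≤ ((n:ℝ)+1) ^ (Fintype.card A) := by
      rw [← Finset.sum_div]
      rw [div_le_iff₀ (by positivity : (0:ℝ) < (n:ℝ)^n)]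
      calc ∑ u ∈ s, ∏ a, ((freq u a : ℝ)) ^ (freq u a)
          ≤ ∑ u : Fin n → A, ∏ a, ((freq u a : ℝ)) ^ (freq u a) :=
            Finset.sum_le_sum_of_subset_of_nonneg (Finset.filter_subset _ _)
              (fun u _ _ => (X_pos u).le)
        _ ≤ (n:ℝ)^n * ((n:ℝ)+1) ^ (Fintype.card A) := sum_X_le hn
        _ = ((n:ℝ)+1) ^ (Fintype.card A) * (n:ℝ)^n := by ring
    have hpos_sy : 0 < ∑ u ∈ s, (∏ i, p (u i)) * y u :=
      Finset.sum_pos (fun u hu => mul_pos (hwpos u hu) (hypos u hu)) hsne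
    calc ∑ u ∈ s, (∏ i, p (u i)) * Real.log (y u)
        ≤ Real.log (∑ u ∈ s, (∏ i, p (u i)) * y u) := hjen
      _ ≤ Real.log (((n:ℝ)+1) ^ (Fintype.card A)) := by
          refine Real.log_le_log hpos_sy ?_
          rw [hsy] at hpos_sy ⊢
          exact hXsum
      _ = (Fintype.card A : ℝ) * Real.log ((n:ℝ)+1) := by rw [Real.log_pow]

  -- expectation of log of type class size
  set Z : (Fin n → A) → ℝ := fun u => ∑ a, (freq u a : ℝ) * Real.log (freq u a) with hZdef
  set E : ℝ := ∑ u : Fin n → A, (∏ i, p (u i)) * Real.log (typeClassCard u) with hE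
  set Hq : ℝ := -∑ a, p a * Real.logb 2 (p a) with hHq
  set cA : ℝ := (Fintype.card A : ℝ) with hcA
  have hcA0 : 0 ≤ cA := by rw [hcA]; positivity
  have hmid : ∑ u : Fin n → A, (∏ i, p (u i)) * ((n:ℝ) * Real.log n - Z u)
      = ∑ u : Fin n → A, (∏ i, p (u i)) * (-Real.log (∏ i, p (u i)))
        - ∑ u : Fin n → A, (∏ i, p (u i)) *
            (-Real.log (∏ i, p (u i)) - ((n:ℝ) * Real.log n - Z u)) := by
    rw [← Finset.sum_sub_distrib]
    exact Finset.sum_congr rfl fun u _ => by ring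
  have hmid_lb : (n:ℝ) * Real.log 2 * Hq - cA * Real.log ((n:ℝ)+1)
      ≤ ∑ u : Fin n → A, (∏ i, p (u i)) * ((n:ℝ) * Real.log n - Z u) := by
    rw [hmid, hEnt]
    have := hJ
    rw [hHq]
    linarith
  have hmid_ub : ∑ u : Fin n → A, (∏ i, p (u i)) * ((n:ℝ) * Real.log n - Z u)
      ≤ (n:ℝ) * Real.log 2 * Hq := by
    have hstep : ∀ u ∈ (univ : Finset (Fin n → A)),
        (∏ i, p (u i)) * ((n:ℝ) * Real.log n - Z u)
          ≤ (∏ i, p (u i)) * (-Real.log (∏ i, p (u i))) := by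
      intro u _
      by_cases hu : (∏ i, p (u i)) = 0
      · rw [hu, zero_mul, zero_mul]
      · exact mul_le_mul_of_nonneg_left (hgibbs u hu) (hw0 u)
    calc ∑ u : Fin n → A, (∏ i, p (u i)) * ((n:ℝ) * Real.log n - Z u)
        ≤ ∑ u : Fin n → A, (∏ i, p (u i)) * (-Real.log (∏ i, p (u i))) :=
          Finset.sum_le_sum hstep
      _ = (n:ℝ) * Real.log 2 * Hq := by rw [hEnt, hHq]
  have hEub : E ≤ (n:ℝ) * Real.log 2 * Hq + (1 + Real.log n) := by
    calc E ≤ ∑ u : Fin n → A, (∏ i, p (u i)) * (((n:ℝ) * Real.log n - Z u) + (1 + Real.log n)) := by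
          rw [hE]
          refine Finset.sum_le_sum fun u _ => ?_
          refine mul_le_mul_of_nonneg_left ?_ (hw0 u)
          have := hub u
          rw [hZdef]
          simp only
          linarith
      _ = (∑ u : Fin n → A, (∏ i, p (u i)) * ((n:ℝ) * Real.log n - Z u))
            + (∑ u : Fin n → A, ∏ i, p (u i)) * (1 + Real.log n) := by
          rw [Finset.sum_mul, ← Finset.sum_add_distrib]
          exact Finset.sum_congr rfl fun u _ => by ring
      _ ≤ (n:ℝ) * Real.log 2 * Hq + (1 + Real.log n) := by
          rw [hwsum, one_mul]
          linarith [hmid_ub]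
  have hElb : (n:ℝ) * Real.log 2 * Hq - cA * Real.log ((n:ℝ)+1) - cA * (1 + Real.log n) ≤ E := by
    have h1 : ∑ u : Fin n → A, (∏ i, p (u i)) * (((n:ℝ) * Real.log n - Z u) - cA * (1 + Real.log n))
        ≤ E := by
      rw [hE]
      refine Finset.sum_le_sum fun u _ => ?_
      refine mul_le_mul_of_nonneg_left ?_ (hw0 u)
      have := hlb u
      rw [hZdef, hcA]
      simp only
      linarith
    have h2 : ∑ u : Fin n → A, (∏ i, p (u i)) * (((n:ℝ) * Real.log n - Z u) - cA * (1 + Real.log n))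
        = (∑ u : Fin n → A, (∏ i, p (u i)) * ((n:ℝ) * Real.log n - Z u))
            - (∑ u : Fin n → A, ∏ i, p (u i)) * (cA * (1 + Real.log n)) := by
      rw [Finset.sum_mul, ← Finset.sum_sub_distrib]
      exact Finset.sum_congr rfl fun u _ => by ring
    rw [h2, hwsum, one_mul] at h1
    linarith [hmid_lb]
  -- from E to the rate
  have hM1 : ∀ u : Fin n → A, 1 ≤ typeClassCard u := fun u => typeClassCard_pos u
  have hlogb_split : ∑ u : Fin n → A, (∏ i, p (u i)) * Real.logb 2 (typeClassCard u)
      = E / Real.log 2 := by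
    rw [hE, Finset.sum_div]
    refine Finset.sum_congr rfl fun u _ => ?_
    rw [Real.logb]
    ring
  have hup : ∑ u : Fin n → A, (∏ i, p (u i)) * expBits (typeClassCard u) ≤ E / Real.log 2 := by
    rw [← hlogb_split]
    refine Finset.sum_le_sum fun u _ => ?_
    exact mul_le_mul_of_nonneg_left (expBits_le _ (hM1 u)) (hw0 u)
  have hdown : E / Real.log 2 - 3 ≤ ∑ u : Fin n → A, (∏ i, p (u i)) * expBits (typeClassCard u) := by
    have h1 : ∑ u : Fin n → A, (∏ i, p (u i)) * (Real.logb 2 (typeClassCard u) - 3)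
        ≤ ∑ u : Fin n → A, (∏ i, p (u i)) * expBits (typeClassCard u) := by
      refine Finset.sum_le_sum fun u _ => ?_
      exact mul_le_mul_of_nonneg_left (expBits_ge _ (hM1 u)) (hw0 u)
    have h2 : ∑ u : Fin n → A, (∏ i, p (u i)) * (Real.logb 2 (typeClassCard u) - 3)
        = (∑ u : Fin n → A, (∏ i, p (u i)) * Real.logb 2 (typeClassCard u))
            - (∑ u : Fin n → A, ∏ i, p (u i)) * 3 := by
      rw [Finset.sum_mul, ← Finset.sum_sub_distrib]
      exact Finset.sum_congr rfl fun u _ => by ring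
    rw [h2, hwsum, one_mul, hlogb_split] at h1
    linarith
  -- final numeric assembly
  set D : ℝ := (n:ℝ) * Real.log 2 with hD
  have hD0 : 0 < D := by rw [hD]; positivity
  set x : ℝ := Real.log ((n:ℝ)+1) with hx
  have hx0 : 0 ≤ x := by
    rw [hx]; exact Real.log_nonneg (by linarith)
  have hlogle : Real.log n ≤ x := by
    rw [hx]; exact Real.log_le_log hn0 (by linarith)
  have hRub : (1 / (n : ℝ)) * (∑ u : Fin n → A, (∏ i, p (u i)) * expBits (typeClassCard u))
      ≤ Hq + (1 + Real.log n) / D := by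
    have h1 : (1 / (n : ℝ)) * (∑ u : Fin n → A, (∏ i, p (u i)) * expBits (typeClassCard u))
        ≤ (1 / (n : ℝ)) * (E / Real.log 2) :=
      mul_le_mul_of_nonneg_left hup (by positivity)
    have h2 : (1 / (n : ℝ)) * (E / Real.log 2) = E / D := by
      rw [hD]; field_simp
    have h3 : E / D ≤ ((n:ℝ) * Real.log 2 * Hq + (1 + Real.log n)) / D :=
      div_le_div_of_nonneg_right hEub hD0.le
    have h4 : ((n:ℝ) * Real.log 2 * Hq + (1 + Real.log n)) / D = Hq + (1 + Real.log n) / D := by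
      rw [hD]
      field_simp
    linarith [h1, h2.le, h2.ge, h3, h4.le, h4.ge]
  have hRlb : Hq - (cA * x + cA * (1 + Real.log n)) / D - 3 / (n:ℝ)
      ≤ (1 / (n : ℝ)) * (∑ u : Fin n → A, (∏ i, p (u i)) * expBits (typeClassCard u)) := by
    have h1 : (1 / (n : ℝ)) * (E / Real.log 2 - 3)
        ≤ (1 / (n : ℝ)) * (∑ u : Fin n → A, (∏ i, p (u i)) * expBits (typeClassCard u)) :=
      mul_le_mul_of_nonneg_left hdown (by positivity)
    have h2 : (1 / (n : ℝ)) * (E / Real.log 2 - 3) = E / D - 3 / (n:ℝ) := by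
      rw [hD]; field_simp
    have h3 : (D * Hq - cA * x - cA * (1 + Real.log n)) / D ≤ E / D :=
      div_le_div_of_nonneg_right hElb hD0.le
    have h4 : (D * Hq - cA * x - cA * (1 + Real.log n)) / D
        = Hq - (cA * x + cA * (1 + Real.log n)) / D := by
      rw [hD]
      field_simp
      ring
    linarith [h1, h2.le, h2.ge, h3, h4.le, h4.ge]
  rw [abs_sub_le_iff]
  constructor
  · have hnum : 1 + Real.log n ≤ (3 * cA + 2) * (x + 1) := by nlinarith
    have hfrac : (1 + Real.log n) / D ≤ ((3 * cA + 2) * (x + 1)) / D :=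
      div_le_div_of_nonneg_right hnum hD0.le
    have h3n : 0 ≤ 3 / (n:ℝ) := by positivity
    linarith [hRub, hfrac]
  · have hnum : cA * x + cA * (1 + Real.log n) ≤ (3 * cA + 2) * (x + 1) := by
      nlinarith [mul_le_mul_of_nonneg_left hlogle hcA0]
    have hfrac : (cA * x + cA * (1 + Real.log n)) / D ≤ ((3 * cA + 2) * (x + 1)) / D :=
      div_le_div_of_nonneg_right hnum hD0.le
    linarith [hRlb, hfrac]

end Stego13

theorem stmt13 (A : Type*) [Fintype A] [Nonempty A] [DecidableEq A] (μ : PMF A) :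
    Filter.Tendsto (fun n : ℕ => rateL A μ n) Filter.atTop
      (nhds (-∑ a : A, (μ a).toReal * Real.logb 2 (μ a).toReal)) := by
  classical
  have hp0 : ∀ a : A, 0 ≤ (μ a).toReal := fun a => ENNReal.toReal_nonneg
  have hp1 : ∑ a : A, (μ a).toReal = 1 := by
    have h := μ.tsum_coe
    rw [tsum_fintype] at h
    have h2 : (∑ a : A, μ a).toReal = ∑ a : A, (μ a).toReal :=
      ENNReal.toReal_sum (fun a _ => μ.apply_ne_top a)
    rw [h] at h2
    simpa using h2.symm
  set Hq : ℝ := -∑ a : A, (μ a).toReal * Real.logb 2 (μ a).toReal with hHq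
  set cA : ℝ := (Fintype.card A : ℝ) with hcA
  set B : ℕ → ℝ := fun n => ((3 * cA + 2) * (Real.log ((n:ℝ)+1) + 1)) / ((n:ℝ) * Real.log 2)
      + 3 / (n:ℝ) with hB
  have key : ∀ᶠ n : ℕ in Filter.atTop, ‖rateL A μ n - Hq‖ ≤ B n := by
    refine Filter.eventually_atTop.mpr ⟨1, fun n hn => ?_⟩
    rw [Real.norm_eq_abs]
    have h := Stego13.main_bound (n := n) (fun a => (μ a).toReal) hp0 hp1 hn
    rw [rateL, hB, hHq, hcA]
    exact h
  have t4 : Filter.Tendsto (fun n : ℕ => 1/(n:ℝ)) Filter.atTop (nhds 0) :=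
    tendsto_one_div_atTop_nhds_zero_nat
  have tcomp : Filter.Tendsto (fun n : ℕ => (n:ℝ) + 1) Filter.atTop Filter.atTop :=
    Filter.tendsto_atTop_add_const_right _ 1 tendsto_natCast_atTop_atTop
  have t1 : Filter.Tendsto (fun n : ℕ => Real.log ((n:ℝ)+1) / ((n:ℝ)+1))
      Filter.atTop (nhds 0) :=
    (Real.isLittleO_log_id_atTop.tendsto_div_nhds_zero).comp tcomp
  have t2 : Filter.Tendsto (fun n : ℕ => ((n:ℝ)+1)/(n:ℝ)) Filter.atTop (nhds 1) := by
    have h1 : Filter.Tendsto (fun n : ℕ => 1 + 1/(n:ℝ)) Filter.atTop (nhds 1) := by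
      have := (tendsto_const_nhds : Filter.Tendsto (fun _ : ℕ => (1:ℝ)) Filter.atTop (nhds 1)).add t4
      simpa using this
    refine Filter.Tendsto.congr' ?_ h1
    refine Filter.eventually_atTop.mpr ⟨1, fun n hn => ?_⟩
    have hn0 : (n:ℝ) ≠ 0 := by
      have : (0:ℝ) < n := by exact_mod_cast hn
      exact this.ne'
    field_simp
  have t3 : Filter.Tendsto (fun n : ℕ => Real.log ((n:ℝ)+1) / (n:ℝ)) Filter.atTop (nhds 0) := by
    have tmul := t1.mul t2
    rw [zero_mul] at tmul
    refine Filter.Tendsto.congr' ?_ tmul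
    refine Filter.eventually_atTop.mpr ⟨1, fun n hn => ?_⟩
    have hn0 : (n:ℝ) ≠ 0 := by
      have : (0:ℝ) < n := by exact_mod_cast hn
      exact this.ne'
    have hn1 : (n:ℝ) + 1 ≠ 0 := by positivity
    field_simp
  have hBto : Filter.Tendsto B Filter.atTop (nhds 0) := by
    have hBeq : ∀ n : ℕ, B n = ((3 * cA + 2)/Real.log 2) * (Real.log ((n:ℝ)+1) / (n:ℝ))
        + (((3 * cA + 2)/Real.log 2) * (1/(n:ℝ)) + 3 * (1/(n:ℝ))) := by
      intro n
      rw [hB]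
      ring
    have htend := (t3.const_mul ((3 * cA + 2)/Real.log 2)).add
      ((t4.const_mul ((3 * cA + 2)/Real.log 2)).add (t4.const_mul 3))
    rw [show ((3 * cA + 2)/Real.log 2) * 0 + (((3 * cA + 2)/Real.log 2) * 0 + 3 * 0) = 0 by ring]
      at htend
    exact (Filter.Tendsto.congr (fun n => (hBeq n).symm)) htend
  have h0 : Filter.Tendsto (fun n : ℕ => rateL A μ n - Hq) Filter.atTop (nhds 0) :=
    squeeze_zero_norm' key hBto
  have h1 := h0.add_const Hq
  rw [zero_add] at h1
  refine Filter.Tendsto.congr (fun n => ?_) h1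
  ring
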